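/- The U(L)-module F_{αβ}(M_a ⊗ M_{a'}, ℂ_ε) (with P = P₀⊗M_a where M_a is the R₁-module ⊕_{n∈ℤ}ℂx₁^n with ∂₁x₁^n = (a+n)x₁^n, and P₀ simple over R₀) is simple if and only if βa + βn + ε ≠ 0 for all n ∈ ℤ. -/

import Mathlib

/- STATEMENT 9: the `U(L)`-module `F_{αβ}(P₀ ⊗ M_a, ℂ_ε)` (with `P₀` a simple `R₀`-module and `M_a = ⊕_{n∈ℤ} ℂ x₁^n`, `∂₁ x₁^{n₁} = (a+n₁) x₁^{n₁}`) is simple iff `βa + βn + ε ≠ 0` for all `n ∈ ℤ`.  The `U(L)`-actions are those listed in the paper. -/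
noncomputable section

open TensorProduct

/-- `x₀^n` for `n ∈ ℤ`, from the operators `x₀` and `x₀^{-1}`. -/
noncomputable def zp {P : Type*} [AddCommGroup P] [Module ℂ P]
    (X Xi : Module.End ℂ P) (n : ℤ) : Module.End ℂ P :=
  if 0 ≤ n then X ^ n.toNat else Xi ^ (-n).toNat

/-- `M_a = ⊕_{n₁ ∈ ℤ} ℂ x₁^{n₁}`. -/
abbrev Ma : Type := ℤ →₀ ℂ

lemma e_tmul_single {P : Type*} [AddCommGroup P] [Module ℂ P] (p : P) (k : ℤ) :
    TensorProduct.finsuppScalarRight ℂ ℂ P ℤ (p ⊗ₜ[ℂ] Finsupp.single k (1:ℂ))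
      = Finsupp.single k p := by
  ext i
  rw [TensorProduct.finsuppScalarRight_apply_tmul_apply]
  simp [Finsupp.single_apply, ite_smul]

lemma tensor_decomp {P : Type*} [AddCommGroup P] [Module ℂ P] (z : P ⊗[ℂ] Ma) :
    z = ∑ k ∈ (TensorProduct.finsuppScalarRight ℂ ℂ P ℤ z).support,
        (TensorProduct.finsuppScalarRight ℂ ℂ P ℤ z k) ⊗ₜ[ℂ] Finsupp.single k (1:ℂ) := by
  apply (TensorProduct.finsuppScalarRight ℂ ℂ P ℤ).injective
  rw [map_sum]
  simp only [e_tmul_single]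
  exact (Finsupp.sum_single _).symm

lemma e_diag_apply {P : Type*} [AddCommGroup P] [Module ℂ P]
    (f : Module.End ℂ P) (c : ℤ → ℂ) (z : P ⊗[ℂ] Ma) (i : ℤ) :
    TensorProduct.finsuppScalarRight ℂ ℂ P ℤ
      (TensorProduct.map f (Finsupp.lsum ℂ fun k => c k • Finsupp.lsingle k) z) i
      = c i • f (TensorProduct.finsuppScalarRight ℂ ℂ P ℤ z i) := by
  induction z using TensorProduct.induction_on with
  | zero => simp
  | tmul p q =>
    induction q using Finsupp.induction_linear with
    | zero => simp
    | add q1 q2 h1 h2 =>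
      simp only [TensorProduct.tmul_add, map_add, Finsupp.add_apply, h1, h2, smul_add]
    | single j x =>
      rw [TensorProduct.map_tmul, Finsupp.lsum_single, LinearMap.smul_apply,
        Finsupp.lsingle_apply, TensorProduct.tmul_smul, map_smul, Finsupp.smul_apply,
        TensorProduct.finsuppScalarRight_apply_tmul_apply,
        TensorProduct.finsuppScalarRight_apply_tmul_apply]
      rw [Finsupp.single_apply]
      by_cases h : j = i
      · subst h; simp [map_smul, smul_smul, mul_comm]
      · simp [h]
  | add z1 z2 h1 h2 =>
    simp only [map_add, Finsupp.add_apply, h1, h2, smul_add]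

lemma map_tmul_lsum_single {P : Type*} [AddCommGroup P] [Module ℂ P]
    (f : Module.End ℂ P) (c : ℤ → ℂ) (σ : ℤ → ℤ) (p : P) (k : ℤ) :
    TensorProduct.map f (Finsupp.lsum ℂ fun k => c k • Finsupp.lsingle (σ k))
      (p ⊗ₜ[ℂ] Finsupp.single k (1:ℂ))
      = c k • ((f p) ⊗ₜ[ℂ] Finsupp.single (σ k) (1:ℂ)) := by
  rw [TensorProduct.map_tmul, Finsupp.lsum_single, LinearMap.smul_apply,
    Finsupp.lsingle_apply, TensorProduct.tmul_smul]

lemma map_tmul_bshift {P : Type*} [AddCommGroup P] [Module ℂ P]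
    (f : Module.End ℂ P) (p : P) (k : ℤ) :
    TensorProduct.map f (Finsupp.lmapDomain ℂ ℂ (fun k : ℤ => k - 1))
      (p ⊗ₜ[ℂ] Finsupp.single k (1:ℂ))
      = (f p) ⊗ₜ[ℂ] Finsupp.single (k-1) (1:ℂ) := by
  rw [TensorProduct.map_tmul, Finsupp.lmapDomain_apply, Finsupp.mapDomain_single]

lemma zp_zero {P : Type*} [AddCommGroup P] [Module ℂ P] (X Xi : Module.End ℂ P) :
    zp X Xi 0 = 1 := by simp [zp]

lemma zp_one {P : Type*} [AddCommGroup P] [Module ℂ P] (X Xi : Module.End ℂ P) :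
    zp X Xi 1 = X := by simp [zp]

lemma zp_neg_one {P : Type*} [AddCommGroup P] [Module ℂ P] (X Xi : Module.End ℂ P) :
    zp X Xi (-1) = Xi := by norm_num [zp]

theorem F_P0Ma_simple_iff
    (α β ε a : ℂ) (hβ : β ≠ 0)
    -- `P₀`, a simple module over `R₀ = ℂ[x₀^{±1}, ∂_{x₀}]`
    {P₀ : Type*} [AddCommGroup P₀] [Module ℂ P₀] [Nontrivial P₀]
    (Y Yi Dd : Module.End ℂ P₀)
    (hYYi : Y * Yi = 1) (hYiY : Yi * Y = 1) (hDY : Dd * Y - Y * Dd = 1)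
    (hP0simple : ∀ N : Submodule ℂ P₀,
      (∀ x ∈ N, Y x ∈ N ∧ Yi x ∈ N ∧ Dd x ∈ N) → N = ⊥ ∨ N = ⊤) :
    -- simplicity of `F_{αβ}(P₀ ⊗ M_a, ℂ_ε)` ↔ `βa + βn + ε ≠ 0` for all `n ∈ ℤ`
    ((∀ N : Submodule ℂ (P₀ ⊗[ℂ] Ma),
      (∀ (n : ℤ), ∀ z ∈ N,
        -- L_n : x₀^n ∂₀ p₀ ⊗ x₁^{n₁} + nα x₀^n p₀ ⊗ x₁^{n₁}
        (TensorProduct.map (zp Y Yi n * (Y * Dd) + ((n : ℂ) * α) • zp Y Yi n)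
          LinearMap.id) z ∈ N ∧
        -- d_n : x₀^n p₀ ⊗ (a + n₁) x₁^{n₁}
        (TensorProduct.map (zp Y Yi n)
          (Finsupp.lsum ℂ fun k : ℤ => (a + (k : ℂ)) • Finsupp.lsingle k)) z ∈ N ∧
        -- a_n : x₀^n p₀ ⊗ (βa + βn₁ + ε) x₁^{n₁+1}
        (TensorProduct.map (zp Y Yi n)
          (Finsupp.lsum ℂ fun k : ℤ =>
            (β * a + β * (k : ℂ) + ε) • Finsupp.lsingle (k + 1))) z ∈ N ∧
        -- b_n : x₀^n p₀ ⊗ x₁^{n₁-1}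
        (TensorProduct.map (zp Y Yi n)
          (Finsupp.lmapDomain ℂ ℂ (fun k : ℤ => k - 1))) z ∈ N ∧
        -- c_n : -β x₀^n p₀ ⊗ x₁^{n₁}
        ((-β) • TensorProduct.map (zp Y Yi n) LinearMap.id) z ∈ N) →
      N = ⊥ ∨ N = ⊤)
      ↔ ∀ n : ℤ, β * a + β * (n : ℂ) + ε ≠ 0) := by
  constructor
  · -- simplicity → nonvanishing
    intro hsimp n
    by_contra h0
    set S : Set (P₀ ⊗[ℂ] Ma) :=
      {z | ∃ p : P₀, ∃ k : ℤ, k ≤ n ∧ z = p ⊗ₜ[ℂ] Finsupp.single k (1:ℂ)} with hS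
    set N : Submodule ℂ (P₀ ⊗[ℂ] Ma) := Submodule.span ℂ S with hNdef
    have hmemS : ∀ (p : P₀) (k : ℤ), k ≤ n →
        p ⊗ₜ[ℂ] Finsupp.single k (1:ℂ) ∈ N :=
      fun p k hk => Submodule.subset_span ⟨p, k, hk, rfl⟩
    have hT : ∀ T : (P₀ ⊗[ℂ] Ma) →ₗ[ℂ] (P₀ ⊗[ℂ] Ma),
        (∀ (p : P₀) (k : ℤ), k ≤ n → T (p ⊗ₜ[ℂ] Finsupp.single k (1:ℂ)) ∈ N) →
        ∀ z ∈ N, T z ∈ N := by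
      intro T hgen z hz
      have hle : Submodule.span ℂ S ≤ N.comap T := by
        rw [Submodule.span_le]
        rintro s ⟨p, k, hk, rfl⟩
        exact hgen p k hk
      exact hle hz
    have hclos : ∀ (m : ℤ), ∀ z ∈ N,
        (TensorProduct.map (zp Y Yi m * (Y * Dd) + ((m : ℂ) * α) • zp Y Yi m)
          LinearMap.id) z ∈ N ∧
        (TensorProduct.map (zp Y Yi m)
          (Finsupp.lsum ℂ fun k : ℤ => (a + (k : ℂ)) • Finsupp.lsingle k)) z ∈ N ∧
        (TensorProduct.map (zp Y Yi m)
          (Finsupp.lsum ℂ fun k : ℤ =>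
            (β * a + β * (k : ℂ) + ε) • Finsupp.lsingle (k + 1))) z ∈ N ∧
        (TensorProduct.map (zp Y Yi m)
          (Finsupp.lmapDomain ℂ ℂ (fun k : ℤ => k - 1))) z ∈ N ∧
        ((-β) • TensorProduct.map (zp Y Yi m) LinearMap.id) z ∈ N := by
      intro m z hz
      refine ⟨?_, ?_, ?_, ?_, ?_⟩
      · refine hT _ (fun p k hk => ?_) z hz
        rw [TensorProduct.map_tmul, LinearMap.id_apply]
        exact hmemS _ k hk
      · refine hT _ (fun p k hk => ?_) z hz
        rw [map_tmul_lsum_single (σ := fun k => k)]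
        exact N.smul_mem _ (hmemS _ k hk)
      · refine hT _ (fun p k hk => ?_) z hz
        rw [map_tmul_lsum_single (σ := fun k => k + 1)]
        rcases lt_or_eq_of_le hk with hlt | heq
        · exact N.smul_mem _ (hmemS _ (k+1) (by omega))
        · subst heq
          rw [h0, zero_smul]
          exact N.zero_mem
      · refine hT _ (fun p k hk => ?_) z hz
        rw [map_tmul_bshift]
        exact hmemS _ (k-1) (by omega)
      · refine hT _ (fun p k hk => ?_) z hz
        rw [LinearMap.smul_apply, TensorProduct.map_tmul, LinearMap.id_apply]
        exact N.smul_mem _ (hmemS _ k hk)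
    rcases hsimp N hclos with hbot | htop
    · obtain ⟨p, hp⟩ := exists_ne (0 : P₀)
      have h1 : p ⊗ₜ[ℂ] Finsupp.single n (1:ℂ) ∈ N := hmemS p n le_rfl
      rw [hbot, Submodule.mem_bot] at h1
      have h2 := congrArg (TensorProduct.finsuppScalarRight ℂ ℂ P₀ ℤ) h1
      rw [e_tmul_single, map_zero] at h2
      exact hp (Finsupp.single_eq_zero.1 h2)
    · obtain ⟨p, hp⟩ := exists_ne (0 : P₀)
      have h1 : p ⊗ₜ[ℂ] Finsupp.single (n+1) (1:ℂ) ∈ N := htop ▸ Submodule.mem_top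
      have h2 : N ≤ LinearMap.ker ((Finsupp.lapply (n+1) : (ℤ →₀ P₀) →ₗ[ℂ] P₀) ∘ₗ
          (TensorProduct.finsuppScalarRight ℂ ℂ P₀ ℤ).toLinearMap) := by
        rw [hNdef, Submodule.span_le]
        rintro s ⟨q, k, hk, rfl⟩
        rw [SetLike.mem_coe, LinearMap.mem_ker, LinearMap.comp_apply,
          LinearEquiv.coe_coe, e_tmul_single, Finsupp.lapply_apply,
          Finsupp.single_apply, if_neg (by omega)]
      have h3 := h2 h1
      rw [LinearMap.mem_ker, LinearMap.comp_apply, LinearEquiv.coe_coe,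
        e_tmul_single, Finsupp.lapply_apply, Finsupp.single_apply, if_pos rfl] at h3
      exact hp h3
  · -- nonvanishing → simplicity
    intro hne N hclos
    by_cases hbot : N = ⊥
    · exact Or.inl hbot
    right
    have hsc : ∀ (c : ℂ) (v : P₀ ⊗[ℂ] Ma), c ≠ 0 → c • v ∈ N → v ∈ N := by
      intro c v hc hv
      have := N.smul_mem c⁻¹ hv
      rwa [smul_smul, inv_mul_cancel₀ hc, one_smul] at this
    -- components of elements of N belong to N
    have hd0 : ∀ z ∈ N, (TensorProduct.map (1 : Module.End ℂ P₀)
        (Finsupp.lsum ℂ fun k : ℤ => (a + (k : ℂ)) • Finsupp.lsingle k)) z ∈ N := by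
      intro z hz
      have := (hclos 0 z hz).2.1
      rwa [zp_zero] at this
    have hext : ∀ m : ℕ, ∀ z ∈ N,
        (TensorProduct.finsuppScalarRight ℂ ℂ P₀ ℤ z).support.card ≤ m →
        ∀ k : ℤ, (TensorProduct.finsuppScalarRight ℂ ℂ P₀ ℤ z k)
          ⊗ₜ[ℂ] Finsupp.single k (1:ℂ) ∈ N := by
      intro m
      induction m with
      | zero =>
        intro z hz hcard k
        have hs : (TensorProduct.finsuppScalarRight ℂ ℂ P₀ ℤ z).support = ∅ :=
          Finset.card_eq_zero.1 (le_antisymm hcard (Nat.zero_le _))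
        have hz0 : TensorProduct.finsuppScalarRight ℂ ℂ P₀ ℤ z k = 0 :=
          Finsupp.notMem_support_iff.1 (by simp [hs])
        rw [hz0, TensorProduct.zero_tmul]
        exact N.zero_mem
      | succ m ih =>
        intro z hz hcard k
        by_cases hc : (TensorProduct.finsuppScalarRight ℂ ℂ P₀ ℤ z).support.card ≤ m
        · exact ih z hz hc k
        have hne' : (TensorProduct.finsuppScalarRight ℂ ℂ P₀ ℤ z).support.Nonempty := by
          rw [← Finset.card_pos]; omega
        obtain ⟨j, hj⟩ := hne'
        set w := (TensorProduct.map (1 : Module.End ℂ P₀)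
            (Finsupp.lsum ℂ fun k : ℤ => (a + (k : ℂ)) • Finsupp.lsingle k)) z
            + (-(a + (j:ℂ))) • z with hw
        have hwN : w ∈ N := by
          rw [hw]
          exact N.add_mem (hd0 z hz) (N.smul_mem _ hz)
        have hwk : ∀ i : ℤ, TensorProduct.finsuppScalarRight ℂ ℂ P₀ ℤ w i
            = ((i:ℂ) - (j:ℂ)) • TensorProduct.finsuppScalarRight ℂ ℂ P₀ ℤ z i := by
          intro i
          rw [hw, map_add, LinearEquiv.map_smul, Finsupp.add_apply, Finsupp.smul_apply,
            e_diag_apply, Module.End.one_apply, ← add_smul]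
          ring_nf
        have hsupp : (TensorProduct.finsuppScalarRight ℂ ℂ P₀ ℤ w).support
            ⊆ (TensorProduct.finsuppScalarRight ℂ ℂ P₀ ℤ z).support.erase j := by
          intro i hi
          rw [Finsupp.mem_support_iff, hwk] at hi
          refine Finset.mem_erase.2 ⟨?_, Finsupp.mem_support_iff.2 ?_⟩
          · rintro rfl; simp at hi
          · intro h; rw [h, smul_zero] at hi; exact hi rfl
        have hcard' : (TensorProduct.finsuppScalarRight ℂ ℂ P₀ ℤ w).support.card ≤ m := by
          have h1 := Finset.card_le_card hsupp
          have h2 := Finset.card_erase_of_mem hj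
          omega
        have hcomp : ∀ i : ℤ, i ≠ j →
            (TensorProduct.finsuppScalarRight ℂ ℂ P₀ ℤ z i)
              ⊗ₜ[ℂ] Finsupp.single i (1:ℂ) ∈ N := by
          intro i hij
          have h1 := ih w hwN hcard' i
          rw [hwk, ← TensorProduct.smul_tmul'] at h1
          refine hsc _ _ ?_ h1
          rw [sub_ne_zero]
          exact_mod_cast fun h => hij (by exact_mod_cast h)
        by_cases hkj : k = j
        · subst hkj
          have hsum : ∑ i ∈ (TensorProduct.finsuppScalarRight ℂ ℂ P₀ ℤ z).support.erase k,
              (TensorProduct.finsuppScalarRight ℂ ℂ P₀ ℤ z i)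
                ⊗ₜ[ℂ] Finsupp.single i (1:ℂ) ∈ N :=
            N.sum_mem (fun i hi => hcomp i (Finset.ne_of_mem_erase hi))
          have hdec2 : z = (TensorProduct.finsuppScalarRight ℂ ℂ P₀ ℤ z k)
                ⊗ₜ[ℂ] Finsupp.single k (1:ℂ)
              + ∑ i ∈ (TensorProduct.finsuppScalarRight ℂ ℂ P₀ ℤ z).support.erase k,
                (TensorProduct.finsuppScalarRight ℂ ℂ P₀ ℤ z i)
                  ⊗ₜ[ℂ] Finsupp.single i (1:ℂ) := by
            conv_lhs => rw [tensor_decomp z]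
            exact (Finset.add_sum_erase _ _ hj).symm
          have hdec : (TensorProduct.finsuppScalarRight ℂ ℂ P₀ ℤ z k)
              ⊗ₜ[ℂ] Finsupp.single k (1:ℂ)
              = z + (-1:ℂ) • ∑ i ∈ (TensorProduct.finsuppScalarRight ℂ ℂ P₀ ℤ z).support.erase k,
                (TensorProduct.finsuppScalarRight ℂ ℂ P₀ ℤ z i)
                  ⊗ₜ[ℂ] Finsupp.single i (1:ℂ) := by
            have h5 : (TensorProduct.finsuppScalarRight ℂ ℂ P₀ ℤ z k)
                ⊗ₜ[ℂ] Finsupp.single k (1:ℂ)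
              = ((TensorProduct.finsuppScalarRight ℂ ℂ P₀ ℤ z k)
                  ⊗ₜ[ℂ] Finsupp.single k (1:ℂ)
                + ∑ i ∈ (TensorProduct.finsuppScalarRight ℂ ℂ P₀ ℤ z).support.erase k,
                  (TensorProduct.finsuppScalarRight ℂ ℂ P₀ ℤ z i)
                    ⊗ₜ[ℂ] Finsupp.single i (1:ℂ))
                + (-1:ℂ) • ∑ i ∈ (TensorProduct.finsuppScalarRight ℂ ℂ P₀ ℤ z).support.erase k,
                  (TensorProduct.finsuppScalarRight ℂ ℂ P₀ ℤ z i)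
                    ⊗ₜ[ℂ] Finsupp.single i (1:ℂ) := by
              module
            rw [← hdec2] at h5
            exact h5
          rw [hdec]
          exact N.add_mem hz (N.smul_mem _ hsum)
        · exact hcomp k hkj
    obtain ⟨z, hzN, hz0⟩ := (Submodule.ne_bot_iff N).1 hbot
    have hez : TensorProduct.finsuppScalarRight ℂ ℂ P₀ ℤ z ≠ 0 := by
      intro h
      exact hz0 ((TensorProduct.finsuppScalarRight ℂ ℂ P₀ ℤ).map_eq_zero_iff.1 h)
    obtain ⟨k₀, hk₀⟩ : ∃ k₀, TensorProduct.finsuppScalarRight ℂ ℂ P₀ ℤ z k₀ ≠ 0 := by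
      by_contra h
      push_neg at h
      exact hez (Finsupp.ext h)
    have h1 : (TensorProduct.finsuppScalarRight ℂ ℂ P₀ ℤ z k₀)
        ⊗ₜ[ℂ] Finsupp.single k₀ (1:ℂ) ∈ N := hext _ z hzN le_rfl k₀
    -- closure facts on pure tensors
    have hcN : ∀ (nn : ℤ) (p : P₀) (k : ℤ),
        p ⊗ₜ[ℂ] Finsupp.single k (1:ℂ) ∈ N →
        (zp Y Yi nn p) ⊗ₜ[ℂ] Finsupp.single k (1:ℂ) ∈ N := by
      intro nn p k hp
      have h := (hclos nn _ hp).2.2.2.2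
      rw [LinearMap.smul_apply, TensorProduct.map_tmul, LinearMap.id_apply] at h
      exact hsc (-β) _ (neg_ne_zero.2 hβ) h
    have hLN : ∀ (p : P₀) (k : ℤ), p ⊗ₜ[ℂ] Finsupp.single k (1:ℂ) ∈ N →
        (Y (Dd p)) ⊗ₜ[ℂ] Finsupp.single k (1:ℂ) ∈ N := by
      intro p k hp
      have h := (hclos 0 _ hp).1
      rw [zp_zero] at h
      simp only [Int.cast_zero, zero_mul, zero_smul, add_zero, one_mul] at h
      rwa [TensorProduct.map_tmul, LinearMap.id_apply, Module.End.mul_apply] at h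
    set Nk : Submodule ℂ P₀ :=
      N.comap ((TensorProduct.mk ℂ P₀ Ma).flip (Finsupp.single k₀ (1:ℂ))) with hNk
    have hNkmem : ∀ p : P₀, p ∈ Nk ↔ p ⊗ₜ[ℂ] Finsupp.single k₀ (1:ℂ) ∈ N := by
      intro p
      rw [hNk, Submodule.mem_comap, LinearMap.flip_apply, TensorProduct.mk_apply]
    have hinv : ∀ x ∈ Nk, Y x ∈ Nk ∧ Yi x ∈ Nk ∧ Dd x ∈ Nk := by
      intro x hx
      rw [hNkmem] at hx
      refine ⟨?_, ?_, ?_⟩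
      · rw [hNkmem]
        have := hcN 1 x k₀ hx
        rwa [zp_one] at this
      · rw [hNkmem]
        have := hcN (-1) x k₀ hx
        rwa [zp_neg_one] at this
      · rw [hNkmem]
        have h2 := hcN (-1) _ k₀ (hLN x k₀ hx)
        rw [zp_neg_one] at h2
        have h3 : Yi (Y (Dd x)) = Dd x := by
          rw [← Module.End.mul_apply, hYiY, Module.End.one_apply]
        rwa [h3] at h2
    rcases hP0simple Nk hinv with hNkbot | hNktop
    · exfalso
      have hm : TensorProduct.finsuppScalarRight ℂ ℂ P₀ ℤ z k₀ ∈ Nk := (hNkmem _).2 h1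
      rw [hNkbot, Submodule.mem_bot] at hm
      exact hk₀ hm
    have hallk0 : ∀ p : P₀, p ⊗ₜ[ℂ] Finsupp.single k₀ (1:ℂ) ∈ N :=
      fun p => (hNkmem p).1 (hNktop ▸ Submodule.mem_top)
    have hup : ∀ k : ℤ, (∀ p : P₀, p ⊗ₜ[ℂ] Finsupp.single k (1:ℂ) ∈ N) →
        ∀ p : P₀, p ⊗ₜ[ℂ] Finsupp.single (k+1) (1:ℂ) ∈ N := by
      intro k h p
      have h2 := (hclos 0 _ (h p)).2.2.1
      rw [zp_zero, map_tmul_lsum_single (σ := fun k => k + 1), Module.End.one_apply] at h2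
      exact hsc _ _ (hne k) h2
    have hdown : ∀ k : ℤ, (∀ p : P₀, p ⊗ₜ[ℂ] Finsupp.single k (1:ℂ) ∈ N) →
        ∀ p : P₀, p ⊗ₜ[ℂ] Finsupp.single (k-1) (1:ℂ) ∈ N := by
      intro k h p
      have h2 := (hclos 0 _ (h p)).2.2.2.1
      rwa [zp_zero, map_tmul_bshift, Module.End.one_apply] at h2
    have hall : ∀ (k : ℤ) (p : P₀), p ⊗ₜ[ℂ] Finsupp.single k (1:ℂ) ∈ N := by
      have key : ∀ m : ℤ, ∀ p : P₀, p ⊗ₜ[ℂ] Finsupp.single (k₀ + m) (1:ℂ) ∈ N := by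
        intro m
        induction m using Int.induction_on with
        | zero => simpa using hallk0
        | succ i ih =>
          intro p
          have := hup (k₀ + i) ih p
          rwa [show k₀ + ((i:ℤ)+1) = (k₀ + i) + 1 by ring]
        | pred i ih =>
          intro p
          have := hdown (k₀ + (-(i:ℤ))) ih p
          rwa [show k₀ + (-(i:ℤ) - 1) = (k₀ + (-(i:ℤ))) - 1 by ring]
      intro k p
      have := key (k - k₀) p
      rwa [show k₀ + (k - k₀) = k by ring] at this
    rw [Submodule.eq_top_iff']
    intro z'
    rw [tensor_decomp z']
    exact N.sum_mem fun k _ => hall k _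

end
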